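/- arXiv:1401.5112 — 4 statements merged into one kernel-verified Lean document; each statement's English description precedes it below -/
import Mathlib

section
/- Let n ≥ 1, let m : Fin n → ℝ with m_k > 0 for all k, let r : Fin n → ℝ, and let θ > 0. Set a_k = exp(r_k), ρⁿ = ∑_j m_j a_j, Y_k = m_k a_k / ρⁿ, and π_m = θ ∑_j a_j. Then the matrix D̂ with entries D̂_{kl} = θ C(Y)_{kl} a_l / (π_m m_k) is symmetric and positive semidefinite. -/
open scoped BigOperators

/-- The Maxwell–Stefan mixture diffusion matrix: diagonal entries `∑_{i ≠ k} Y i`,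
off-diagonal entries `-Y k`. -/
noncomputable def mixC {n : ℕ} (Y : Fin n → ℝ) : Matrix (Fin n) (Fin n) ℝ :=
  Matrix.of fun k l => if k = l then ∑ i ∈ Finset.univ.erase k, Y i else -Y k

/-- The matrix `D̂_{kl} = θ C(Y)_{kl} e^{r_l} / (π_m m_k)` from the Galerkin-level
species equations, where `a_k = e^{r_k}`, `Y_k = m_k a_k / ∑_j m_j a_j` and
`π_m = θ ∑_j a_j`. -/
noncomputable def Dhat {n : ℕ} (m r : Fin n → ℝ) (θ : ℝ) : Matrix (Fin n) (Fin n) ℝ :=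
  Matrix.of fun k l =>
    θ * mixC (fun i => m i * Real.exp (r i) / ∑ j, m j * Real.exp (r j)) k l
        * Real.exp (r l) / ((θ * ∑ j, Real.exp (r j)) * m k)

/-- The matrix `D̂` is symmetric and positive semidefinite. -/
theorem stmt4 {n : ℕ} (hn : 1 ≤ n) (m r : Fin n → ℝ)
    (hm : ∀ k, 0 < m k) (θ : ℝ) (hθ : 0 < θ) :
    (Dhat m r θ).IsSymm ∧ (Dhat m r θ).PosSemidef := by
  have hne : Nonempty (Fin n) := ⟨⟨0, hn⟩⟩
  set a : Fin n → ℝ := fun i => Real.exp (r i) with ha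
  have hapos : ∀ i, 0 < a i := fun i => Real.exp_pos _
  have hS : 0 < ∑ j, a j :=
    Finset.sum_pos (fun i _ => hapos i) Finset.univ_nonempty
  have hρ : 0 < ∑ j, m j * a j :=
    Finset.sum_pos (fun i _ => mul_pos (hm i) (hapos i)) Finset.univ_nonempty
  set S : ℝ := ∑ j, a j with hSdef
  set ρ : ℝ := ∑ j, m j * a j with hρdef
  have hentry : ∀ k l, Dhat m r θ k l =
      (if k = l then a k / (m k * S) else 0) - a k * a l / (ρ * S) := by
    intro k l
    simp only [Dhat, mixC, Matrix.of_apply, ← ha, ← hSdef, ← hρdef]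
    split_ifs with h
    · subst h
      rw [← Finset.sum_div, Finset.sum_erase_eq_sub (Finset.mem_univ k), ← hρdef]
      field_simp [hθ.ne', hS.ne', hρ.ne', (hm k).ne']
      ring
    · have hρ' : (∑ x, m x * Real.exp (r x)) = ρ := rfl
      simp only [hρ']
      field_simp [hθ.ne', hS.ne', hρ.ne', (hm k).ne']
      ring
  clear_value a S ρ
  have hsym : (Dhat m r θ).IsSymm := by
    unfold Matrix.IsSymm
    ext k l
    rw [Matrix.transpose_apply, hentry, hentry]
    by_cases h : k = l
    · subst h; rfl
    · simp [h, Ne.symm h]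
      ring
  refine ⟨hsym, Matrix.posSemidef_iff_dotProduct_mulVec.mpr ⟨?_, fun x => ?_⟩⟩
  · rw [Matrix.IsHermitian, Matrix.conjTranspose_eq_transpose_of_trivial]
    exact hsym
  · have hstar : (star x : Fin n → ℝ) = x := by simp
    rw [hstar]
    have hrow : ∀ k, ((Dhat m r θ).mulVec x) k
        = a k * x k / (m k * S) - a k * (∑ l, a l * x l) / (ρ * S) := by
      intro k
      simp only [Matrix.mulVec, dotProduct, hentry, sub_mul, ite_mul, zero_mul,
        Finset.sum_sub_distrib, Finset.sum_ite_eq, Finset.mem_univ, if_true]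
      rw [Finset.mul_sum, Finset.sum_div]
      congr 1
      · ring
      · exact Finset.sum_congr rfl fun l _ => by ring
    have hquad : dotProduct x ((Dhat m r θ).mulVec x)
        = (∑ k, x k ^ 2 * a k / m k) / S - (∑ k, a k * x k) ^ 2 / (ρ * S) := by
      simp only [dotProduct, hrow, mul_sub, Finset.sum_sub_distrib]
      congr 1
      · rw [Finset.sum_div]
        exact Finset.sum_congr rfl fun k _ => by ring
      · rw [sq, mul_div_assoc, Finset.sum_mul]
        exact Finset.sum_congr rfl fun k _ => by ring
    rw [hquad, sub_nonneg]
    -- Cauchy–Schwarz: (∑ a x)² ≤ (∑ x² a/m) * ρ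
    have hCS : (∑ k, a k * x k) ^ 2 ≤ (∑ k, x k ^ 2 * a k / m k) * ρ := by
      have h1 : ∀ k, a k * x k
          = (x k * Real.sqrt (a k / m k)) * Real.sqrt (m k * a k) := by
        intro k
        rw [mul_assoc, ← Real.sqrt_mul (div_pos (hapos k) (hm k)).le]
        have : a k / m k * (m k * a k) = (a k) ^ 2 := by
          field_simp [(hm k).ne']
        rw [this, Real.sqrt_sq (hapos k).le]
        ring
      have h2 : ∀ k, (x k * Real.sqrt (a k / m k)) ^ 2 = x k ^ 2 * a k / m k := by
        intro k
        rw [mul_pow, Real.sq_sqrt (div_pos (hapos k) (hm k)).le]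
        ring
      have h3 : ∀ k, (Real.sqrt (m k * a k)) ^ 2 = m k * a k := fun k =>
        Real.sq_sqrt (mul_pos (hm k) (hapos k)).le
      calc (∑ k, a k * x k) ^ 2
          = (∑ k, (x k * Real.sqrt (a k / m k)) * Real.sqrt (m k * a k)) ^ 2 := by
            rw [Finset.sum_congr rfl fun k _ => h1 k]
        _ ≤ (∑ k, (x k * Real.sqrt (a k / m k)) ^ 2) * ∑ k, (Real.sqrt (m k * a k)) ^ 2 :=
            Finset.sum_mul_sq_le_sq_mul_sq _ _ _
        _ = (∑ k, x k ^ 2 * a k / m k) * ρ := by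
            rw [Finset.sum_congr rfl fun k _ => h2 k, Finset.sum_congr rfl fun k _ => h3 k,
              ← hρdef]
    calc (∑ k, a k * x k) ^ 2 / (ρ * S)
        ≤ ((∑ k, x k ^ 2 * a k / m k) * ρ) / (ρ * S) := by
          apply div_le_div_of_nonneg_right hCS (mul_pos hρ hS).le
      _ = (∑ k, x k ^ 2 * a k / m k) / S := by
          field_simp [hρ.ne', hS.ne']
end

section
/- Let n ≥ 1, let m : Fin n → ℝ with m_k > 0 for all k, let r : Fin n → ℝ, and let θ > 0. Set a_k = exp(r_k), ρⁿ = ∑_j m_j a_j, Y_k = m_k a_k / ρⁿ, π_m = θ ∑_j a_j, and D̂_{kl} = θ C(Y)_{kl} a_l / (π_m m_k). Then every entry of D̂ is bounded in absolute value: |D̂_{kl}| ≤ 1 / (min_k m_k) for all k, l. -/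
open scoped BigOperators

/-- Every entry of `D̂` is bounded in absolute value by `1 / min_k m_k`. -/
theorem stmt5 {n : ℕ} (hn : 1 ≤ n) (m r : Fin n → ℝ)
    (hm : ∀ k, 0 < m k) (θ : ℝ) (hθ : 0 < θ) :
    ∀ k l : Fin n,
      |Dhat m r θ k l| ≤ 1 / Finset.univ.inf' ⟨k, Finset.mem_univ k⟩ m := by
  intro k l
  have hμpos : 0 < Finset.univ.inf' ⟨k, Finset.mem_univ k⟩ m :=
    (Finset.lt_inf'_iff _).mpr fun i _ => hm i
  have hμk : Finset.univ.inf' ⟨k, Finset.mem_univ k⟩ m ≤ m k :=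
    Finset.inf'_le _ (Finset.mem_univ k)
  set μ := Finset.univ.inf' ⟨k, Finset.mem_univ k⟩ m with hμdef
  have hS : 0 < ∑ j, Real.exp (r j) :=
    Finset.sum_pos (fun j _ => Real.exp_pos _) ⟨k, Finset.mem_univ k⟩
  have hP : 0 < ∑ j, m j * Real.exp (r j) :=
    Finset.sum_pos (fun j _ => mul_pos (hm j) (Real.exp_pos _)) ⟨k, Finset.mem_univ k⟩
  have hSl : Real.exp (r l) ≤ ∑ j, Real.exp (r j) :=
    Finset.single_le_sum (fun i _ => (Real.exp_pos (r i)).le) (Finset.mem_univ l)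
  have hC : |mixC (fun i => m i * Real.exp (r i) / ∑ j, m j * Real.exp (r j)) k l| ≤ 1 := by
    unfold mixC
    simp only [Matrix.of_apply]
    split_ifs with h
    · rw [abs_of_nonneg (Finset.sum_nonneg fun i _ =>
        div_nonneg (mul_pos (hm i) (Real.exp_pos _)).le hP.le)]
      rw [← Finset.sum_div, div_le_one hP]
      exact Finset.sum_le_sum_of_subset_of_nonneg (Finset.erase_subset _ _)
        (fun i _ _ => (mul_pos (hm i) (Real.exp_pos _)).le)
    · rw [abs_neg, abs_of_nonneg (div_nonneg (mul_pos (hm k) (Real.exp_pos _)).le hP.le),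
        div_le_one hP]
      exact Finset.single_le_sum (fun i _ => (mul_pos (hm i) (Real.exp_pos _)).le)
        (Finset.mem_univ k)
  unfold Dhat
  simp only [Matrix.of_apply]
  rw [abs_div, abs_of_pos (mul_pos (mul_pos hθ hS) (hm k)),
    abs_mul, abs_mul, abs_of_pos hθ, abs_of_pos (Real.exp_pos _)]
  rw [div_le_div_iff₀ (mul_pos (mul_pos hθ hS) (hm k)) hμpos]
  have hek : 0 < Real.exp (r l) := Real.exp_pos _
  calc θ * |mixC (fun i => m i * Real.exp (r i) / ∑ j, m j * Real.exp (r j)) k l|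
        * Real.exp (r l) * μ
      = θ * ((|mixC (fun i => m i * Real.exp (r i) / ∑ j, m j * Real.exp (r j)) k l|
          * Real.exp (r l)) * μ) := by ring
    _ ≤ θ * (((1 : ℝ) * (∑ j, Real.exp (r j))) * m k) := by
        refine mul_le_mul_of_nonneg_left ?_ hθ.le
        exact mul_le_mul (mul_le_mul hC hSl hek.le zero_le_one) hμk hμpos.le
          (by positivity)
    _ = 1 * ((θ * ∑ j, Real.exp (r j)) * m k) := by ring
end

section
/- Let n ≥ 1, let m : Fin n → ℝ with m_k > 0 for all k, let r : Fin n → ℝ, and let θ > 0. Set a_k = exp(r_k), ρⁿ = ∑_j m_j a_j, Y_k = m_k a_k / ρⁿ, π_m = θ ∑_j a_j, and D̂_{kl} = θ C(Y)_{kl} a_l / (π_m m_k). Then for every family of vectors v : Fin n → ℝ³ one has the identity ∑_{k,l} D̂_{kl} ⟨v_k, v_l⟩ = ∑_{k} (m_k (∑_j a_j) / a_k) · ‖∑_{l} D̂_{kl} v_l‖². Equivalently, setting F_k := −C₀ m_k ∑_l D̂_{kl} v_l for any C₀ > 0, one has C₀ ∑_{k,l} D̂_{kl} ⟨v_k, v_l⟩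 = (π_m/(C₀ θ)) ∑_k ‖F_k‖² / (m_k a_k). -/
open scoped BigOperators RealInnerProductSpace

/-- The matrix `D̂_{kl} = θ C(Y)_{kl} e^{r_l} / (π_m m_k)` from the Galerkin-level
species equations, where `a_k = e^{r_k}`, `Y_k = m_k a_k / ∑_j m_j a_j` and
`π_m = θ ∑_j a_j`. -/
lemma auxMS {n : ℕ} (hn : 1 ≤ n) (m a : Fin n → ℝ) (hm : ∀ k, 0 < m k) (ha : ∀ k, 0 < a k)
    (d : Fin n → Fin n → ℝ)
    (hd : ∀ k l, d k l = mixC (fun i => m i * a i / ∑ j, m j * a j) k l * a l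
        / ((∑ j, a j) * m k))
    (v : Fin n → EuclideanSpace ℝ (Fin 3)) :
    ∑ k, ∑ l, d k l * ⟪v k, v l⟫
      = ∑ k, (m k * (∑ j, a j) / a k) * ‖∑ l, d k l • v l‖ ^ 2 := by
  haveI : Nonempty (Fin n) := ⟨⟨0, hn⟩⟩
  set ρ : ℝ := ∑ j, m j * a j with hρdef
  set S : ℝ := ∑ j, a j with hSdef
  have hρpos : 0 < ρ := Finset.sum_pos (fun j _ => mul_pos (hm j) (ha j)) Finset.univ_nonempty
  have hSpos : 0 < S := Finset.sum_pos (fun j _ => ha j) Finset.univ_nonempty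
  set Y : Fin n → ℝ := fun i => m i * a i / ρ with hYdef
  have hYsum : ∑ i, Y i = 1 := by
    rw [hYdef, ← Finset.sum_div, ← hρdef, div_self hρpos.ne']
  have hC : ∀ k l, mixC Y k l = (if k = l then 1 else 0) - Y k := by
    intro k l
    by_cases h : k = l
    · subst h
      simp [mixC, Finset.sum_erase_eq_sub (Finset.mem_univ k), hYsum]
    · simp [mixC, h]
  set T : EuclideanSpace ℝ (Fin 3) := ∑ l, a l • v l with hTdef
  set B : Fin n → EuclideanSpace ℝ (Fin 3) := fun k => a k • v k - Y k • T with hBdef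
  have hBsum : ∑ k, B k = 0 := by
    rw [hBdef]
    rw [Finset.sum_sub_distrib, ← Finset.sum_smul, hYsum, one_smul, ← hTdef, sub_self]
  have hBval : ∀ k, ∑ l, (mixC Y k l * a l) • v l = B k := by
    intro k
    simp_rw [hC, sub_mul, sub_smul, Finset.sum_sub_distrib, ite_mul, one_mul, zero_mul,
      ite_smul, zero_smul, Finset.sum_ite_eq, Finset.mem_univ, if_true, mul_smul]
    rw [← Finset.smul_sum, ← hTdef, hBdef]
  have hLHS : ∀ k, ∑ l, d k l * ⟪v k, v l⟫ = (1 / (S * m k)) * ⟪v k, B k⟫ := by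
    intro k
    rw [← hBval k, inner_sum]
    simp_rw [real_inner_smul_right]
    rw [Finset.mul_sum]
    refine Finset.sum_congr rfl fun l _ => ?_
    rw [hd]; ring
  have hw : ∀ k, ∑ l, d k l • v l = (1 / (S * m k)) • B k := by
    intro k
    rw [← hBval k, Finset.smul_sum]
    refine Finset.sum_congr rfl fun l _ => ?_
    rw [smul_smul, hd]
    congr 1
    ring
  have hnormw : ∀ k, ‖∑ l, d k l • v l‖ ^ 2 = (1 / (S * m k)) ^ 2 * ‖B k‖ ^ 2 := by
    intro k
    rw [hw k, norm_smul, mul_pow, Real.norm_eq_abs,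
      abs_of_pos (one_div_pos.mpr (mul_pos hSpos (hm k)))]
  have hterm : ∀ k, (1 / (S * m k)) * ⟪v k, B k⟫
      - (m k * S / a k) * ((1 / (S * m k)) ^ 2 * ‖B k‖ ^ 2)
      = (1 / (S * ρ)) * ⟪T, B k⟫ := by
    intro k
    have h1 : a k * ⟪v k, B k⟫ = ‖B k‖ ^ 2 + Y k * ⟪T, B k⟫ := by
      have hvk : a k • v k = B k + Y k • T := by rw [hBdef]; rw [sub_add_cancel]
      calc a k * ⟪v k, B k⟫ = ⟪a k • v k, B k⟫ := (real_inner_smul_left _ _ _).symm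
        _ = ⟪B k + Y k • T, B k⟫ := by rw [hvk]
        _ = ‖B k‖ ^ 2 + Y k * ⟪T, B k⟫ := by
            rw [inner_add_left, real_inner_smul_left, real_inner_self_eq_norm_sq]
    have hY : Y k = m k * a k / ρ := rfl
    rw [hY] at h1
    have hak := (ha k).ne'
    have hmk := (hm k).ne'
    have hS := hSpos.ne'
    have hρ := hρpos.ne'
    field_simp at h1 ⊢
    linear_combination h1
  have hzero : ∑ k, (1 / (S * ρ)) * ⟪T, B k⟫ = 0 := by
    rw [← Finset.mul_sum, ← inner_sum, hBsum, inner_zero_right, mul_zero]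
  calc ∑ k, ∑ l, d k l * ⟪v k, v l⟫
      = ∑ k, (1 / (S * m k)) * ⟪v k, B k⟫ := Finset.sum_congr rfl fun k _ => hLHS k
    _ = ∑ k, (m k * S / a k) * ((1 / (S * m k)) ^ 2 * ‖B k‖ ^ 2) := by
        have := Finset.sum_congr rfl fun k (_ : k ∈ Finset.univ) => hterm k
        rw [Finset.sum_sub_distrib, hzero] at this
        linarith [this]
    _ = ∑ k, (m k * S / a k) * ‖∑ l, d k l • v l‖ ^ 2 := by
        refine Finset.sum_congr rfl fun k _ => ?_
        rw [hnormw k]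

/-- The entropy-dissipation quadratic form of `D̂` is a weighted sum of squares of
the diffusion fluxes: `∑_{k,l} D̂_{kl} ⟨v_k,v_l⟩ = ∑_k (m_k ∑_j a_j / a_k) ‖∑_l D̂_{kl} v_l‖²`;
equivalently, with `F_k = -C₀ m_k ∑_l D̂_{kl} v_l`,
`C₀ ∑_{k,l} D̂_{kl} ⟨v_k,v_l⟩ = (π_m/(C₀θ)) ∑_k ‖F_k‖²/(m_k a_k)`. -/
theorem stmt6 {n : ℕ} (hn : 1 ≤ n) (m r : Fin n → ℝ)
    (hm : ∀ k, 0 < m k) (θ : ℝ) (hθ : 0 < θ) :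
    (∀ v : Fin n → EuclideanSpace ℝ (Fin 3),
        ∑ k, ∑ l, Dhat m r θ k l * ⟪v k, v l⟫
          = ∑ k, (m k * (∑ j, Real.exp (r j)) / Real.exp (r k))
              * ‖∑ l, Dhat m r θ k l • v l‖ ^ 2) ∧
      ∀ C₀ : ℝ, 0 < C₀ → ∀ v : Fin n → EuclideanSpace ℝ (Fin 3),
        C₀ * ∑ k, ∑ l, Dhat m r θ k l * ⟪v k, v l⟫
          = ((θ * ∑ j, Real.exp (r j)) / (C₀ * θ))
              * ∑ k, ‖(-(C₀ * m k)) • ∑ l, Dhat m r θ k l • v l‖ ^ 2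
                  / (m k * Real.exp (r k)) := by
  have ha : ∀ k, (0:ℝ) < Real.exp (r k) := fun k => Real.exp_pos _
  have hd : ∀ k l, Dhat m r θ k l
      = mixC (fun i => m i * Real.exp (r i) / ∑ j, m j * Real.exp (r j)) k l
          * Real.exp (r l) / ((∑ j, Real.exp (r j)) * m k) := by
    intro k l
    haveI : Nonempty (Fin n) := ⟨⟨0, hn⟩⟩
    have hS : (0:ℝ) < ∑ j, Real.exp (r j) :=
      Finset.sum_pos (fun j _ => ha j) Finset.univ_nonempty
    have h0 : Dhat m r θ k l
        = θ * mixC (fun i => m i * Real.exp (r i) / ∑ j, m j * Real.exp (r j)) k l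
            * Real.exp (r l) / ((θ * ∑ j, Real.exp (r j)) * m k) := rfl
    rw [h0]
    rw [div_eq_div_iff (mul_pos (mul_pos hθ hS) (hm k)).ne' (mul_pos hS (hm k)).ne']
    ring
  have key : ∀ v : Fin n → EuclideanSpace ℝ (Fin 3),
      ∑ k, ∑ l, Dhat m r θ k l * ⟪v k, v l⟫
        = ∑ k, (m k * (∑ j, Real.exp (r j)) / Real.exp (r k))
            * ‖∑ l, Dhat m r θ k l • v l‖ ^ 2 :=
    fun v => auxMS hn m (fun k => Real.exp (r k)) hm ha (fun k l => Dhat m r θ k l) hd v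
  refine ⟨key, ?_⟩
  intro C₀ hC₀ v
  rw [key v, Finset.mul_sum, Finset.mul_sum]
  refine Finset.sum_congr rfl fun k _ => ?_
  have hns : ‖(-(C₀ * m k)) • ∑ l, Dhat m r θ k l • v l‖ ^ 2
      = (C₀ * m k) ^ 2 * ‖∑ l, Dhat m r θ k l • v l‖ ^ 2 := by
    rw [norm_smul, mul_pow, Real.norm_eq_abs, abs_neg,
      abs_of_pos (mul_pos hC₀ (hm k))]
  rw [hns]
  have hak := (ha k).ne'
  have hmk := (hm k).ne'
  field_simp
end

section
/- Entropy production is nonnegative: let n ≥ 1, θ > 0, ρ > 0, κ ≥ 0, C₀ > 0, let m : Fin n → ℝ and ρ' : Fin n → ℝ (the species densities) satisfy m_k > 0, ρ'_k > 0 for all k and ∑_k ρ'_k = ρ; set Y_k = ρ'_k/ρ, p_k = θ ρ'_k/m_k, π_m = ∑_k p_k. Let D be a real 3×3 matrix (the symmetric velocity gradient), h ∈ ℝ³ (the temperature gradient), G : Fin n → ℝ³ (the partial-pressure gradients), and let g, ω : Fin n → ℝ satisfy −ρ ∑_k g_k ω_k ≥ 0. Define the diffusion fluxes F_k := −(C₀/π_m)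 ∑_l C(Y)_{kl} G_l. Then σ := (2ρ/θ) ∑_{i,j} D_{ij}² + κ ‖h‖²/θ² − ∑_k ⟨F_k, G_k⟩/(m_k p_k) − ρ ∑_k g_k ω_k ≥ 0. In particular, the multicomponent-diffusion contribution satisfies ∑_{k,l} C(Y)_{kl} ⟨G_l, G_k⟩/(m_k p_k) ≥ 0. -/
open scoped BigOperators RealInnerProductSpace

private lemma auxAMGM (b c X Y : ℝ) (hb : 0 < b) (hc : 0 < c) :
    2 * (X * Y) ≤ b / c * X ^ 2 + c / b * Y ^ 2 := by
  have h : b / c * X ^ 2 + c / b * Y ^ 2 - 2 * (X * Y) = (b * X - c * Y) ^ 2 / (b * c) := by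
    field_simp
    ring
  have h2 : 0 ≤ (b * X - c * Y) ^ 2 / (b * c) :=
    div_nonneg (sq_nonneg _) (mul_pos hb hc).le
  linarith

private lemma keyNonneg {n : ℕ} (ρ' : Fin n → ℝ) (hρ' : ∀ k, 0 < ρ' k)
    (G : Fin n → EuclideanSpace ℝ (Fin 3)) :
    0 ≤ ∑ k, ∑ l, (if k = l then ∑ i ∈ Finset.univ.erase k, ρ' i else -ρ' k)
        * ⟪G l, G k⟫ / ρ' k := by
  set f : Fin n → Fin n → ℝ := fun k l =>
    if k = l then 0 else ρ' l / ρ' k * ⟪G k, G k⟫ - ⟪G l, G k⟫ with hf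
  have heq : ∀ k, ∑ l, (if k = l then ∑ i ∈ Finset.univ.erase k, ρ' i else -ρ' k)
      * ⟪G l, G k⟫ / ρ' k = ∑ l, f k l := by
    intro k
    rw [← Finset.sum_erase_add _ _ (Finset.mem_univ k),
        ← Finset.sum_erase_add Finset.univ (f k) (Finset.mem_univ k)]
    have h1 : ∑ l ∈ Finset.univ.erase k,
        (if k = l then ∑ i ∈ Finset.univ.erase k, ρ' i else -ρ' k) * ⟪G l, G k⟫ / ρ' k
        = ∑ l ∈ Finset.univ.erase k, -⟪G l, G k⟫ := by
      refine Finset.sum_congr rfl fun l hl => ?_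
      have hkl : k ≠ l := (Finset.ne_of_mem_erase hl).symm
      rw [if_neg hkl, neg_mul, neg_div, mul_div_cancel_left₀ _ (hρ' k).ne']
    have h2 : ∑ l ∈ Finset.univ.erase k, f k l
        = (∑ i ∈ Finset.univ.erase k, ρ' i) * ⟪G k, G k⟫ / ρ' k
          - ∑ l ∈ Finset.univ.erase k, ⟪G l, G k⟫ := by
      have : ∀ l ∈ Finset.univ.erase k, f k l
          = ρ' l * ⟪G k, G k⟫ / ρ' k - ⟪G l, G k⟫ := by
        intro l hl
        have hkl : k ≠ l := (Finset.ne_of_mem_erase hl).symm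
        simp only [hf, if_neg hkl]
        ring
      rw [Finset.sum_congr rfl this, Finset.sum_sub_distrib, ← Finset.sum_div,
        ← Finset.sum_mul]
    have h3 : f k k = 0 := by simp [hf]
    rw [h1, h2, h3, if_pos rfl]
    simp only [Finset.sum_neg_distrib]
    ring
  rw [Finset.sum_congr rfl fun k _ => heq k]
  have hsymm : ∑ k, ∑ l, f l k = ∑ k, ∑ l, f k l := Finset.sum_comm
  have htwo : 2 * ∑ k, ∑ l, f k l = ∑ k, ∑ l, (f k l + f l k) := by
    rw [two_mul]
    nth_rewrite 2 [← hsymm]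
    rw [← Finset.sum_add_distrib]
    exact Finset.sum_congr rfl fun k _ => (Finset.sum_add_distrib).symm
  have hterm : ∀ k l, 0 ≤ f k l + f l k := by
    intro k l
    by_cases hkl : k = l
    · subst hkl; simp [hf]
    · simp only [hf, if_neg hkl, if_neg (Ne.symm hkl)]
      have e1 : ⟪G k, G k⟫ = ‖G k‖ ^ 2 := real_inner_self_eq_norm_sq _
      have e2 : ⟪G l, G l⟫ = ‖G l‖ ^ 2 := real_inner_self_eq_norm_sq _
      have e3 : ⟪G l, G k⟫ = ⟪G k, G l⟫ := real_inner_comm _ _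
      have e4 : ⟪G k, G l⟫ ≤ ‖G k‖ * ‖G l‖ := real_inner_le_norm _ _
      have e5 := auxAMGM (ρ' l) (ρ' k) ‖G k‖ ‖G l‖ (hρ' l) (hρ' k)
      rw [e1, e2, e3]
      linarith
  have : 0 ≤ ∑ k, ∑ l, (f k l + f l k) :=
    Finset.sum_nonneg fun k _ => Finset.sum_nonneg fun l _ => hterm k l
  linarith

/-- Nonnegativity of the entropy production rate
`σ = (2ρ/θ)∑ D_{ij}² + κ‖h‖²/θ² − ∑_k ⟨F_k, G_k⟩/(m_k p_k) − ρ∑ g_k ω_k ≥ 0`,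
where `p_k = θρ'_k/m_k`, `π_m = ∑_k p_k`, `Y_k = ρ'_k/ρ`, and
`F_k = -(C₀/π_m) ∑_l C(Y)_{kl} G_l`; in particular the multicomponent-diffusion
contribution `∑_{k,l} C(Y)_{kl}⟨G_l,G_k⟩/(m_k p_k)` is nonnegative. -/
theorem stmt8 {n : ℕ} (hn : 1 ≤ n) (θ ρ κ C₀ : ℝ)
    (hθ : 0 < θ) (hρ : 0 < ρ) (hκ : 0 ≤ κ) (hC₀ : 0 < C₀)
    (m ρ' : Fin n → ℝ) (hm : ∀ k, 0 < m k) (hρ' : ∀ k, 0 < ρ' k)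
    (hsum : ∑ k, ρ' k = ρ)
    (D : Matrix (Fin 3) (Fin 3) ℝ) (h : EuclideanSpace ℝ (Fin 3))
    (G : Fin n → EuclideanSpace ℝ (Fin 3)) (g ω : Fin n → ℝ)
    (hadm : 0 ≤ -(ρ * ∑ k, g k * ω k)) :
    (0 ≤ (2 * ρ / θ) * (∑ i, ∑ j, D i j ^ 2) + κ * ‖h‖ ^ 2 / θ ^ 2
        - (∑ k, ⟪(-(C₀ / ∑ j, θ * ρ' j / m j)) •
              (∑ l, mixC (fun i => ρ' i / ρ) k l • G l), G k⟫
            / (m k * (θ * ρ' k / m k)))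
        - ρ * ∑ k, g k * ω k) ∧
      0 ≤ ∑ k, ∑ l,
          mixC (fun i => ρ' i / ρ) k l * ⟪G l, G k⟫ / (m k * (θ * ρ' k / m k)) := by
  -- second part first
  have hS2 : 0 ≤ ∑ k, ∑ l,
      mixC (fun i => ρ' i / ρ) k l * ⟪G l, G k⟫ / (m k * (θ * ρ' k / m k)) := by
    have hterm : ∀ k l, mixC (fun i => ρ' i / ρ) k l * ⟪G l, G k⟫ / (m k * (θ * ρ' k / m k))
        = (ρ * θ)⁻¹ * ((if k = l then ∑ i ∈ Finset.univ.erase k, ρ' i else -ρ' k)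
            * ⟪G l, G k⟫ / ρ' k) := by
      intro k l
      have hden : m k * (θ * ρ' k / m k) = θ * ρ' k := by
        rw [mul_comm, div_mul_cancel₀ _ (hm k).ne']
      rw [hden]
      by_cases hkl : k = l
      · simp only [mixC, Matrix.of_apply, if_pos hkl, ← Finset.sum_div]
        field_simp
      · simp only [mixC, Matrix.of_apply, if_neg hkl]
        field_simp
    calc (0:ℝ) ≤ (ρ * θ)⁻¹ * ∑ k, ∑ l,
          ((if k = l then ∑ i ∈ Finset.univ.erase k, ρ' i else -ρ' k)
            * ⟪G l, G k⟫ / ρ' k) := by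
          exact mul_nonneg (inv_nonneg.mpr (mul_pos hρ hθ).le) (keyNonneg ρ' hρ' G)
      _ = ∑ k, ∑ l,
          mixC (fun i => ρ' i / ρ) k l * ⟪G l, G k⟫ / (m k * (θ * ρ' k / m k)) := by
          rw [Finset.mul_sum]
          refine Finset.sum_congr rfl fun k _ => ?_
          rw [Finset.mul_sum]
          exact Finset.sum_congr rfl fun l _ => (hterm k l).symm
  refine ⟨?_, hS2⟩
  set π := ∑ j, θ * ρ' j / m j with hπdef
  have hπ : 0 < π := by
    refine Finset.sum_pos (fun j _ => div_pos (mul_pos hθ (hρ' j)) (hm j)) ?_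
    exact ⟨⟨0, by omega⟩, Finset.mem_univ _⟩
  have hF : ∑ k, ⟪(-(C₀ / π)) • (∑ l, mixC (fun i => ρ' i / ρ) k l • G l), G k⟫
        / (m k * (θ * ρ' k / m k))
      = -(C₀ / π) * ∑ k, ∑ l,
          mixC (fun i => ρ' i / ρ) k l * ⟪G l, G k⟫ / (m k * (θ * ρ' k / m k)) := by
    rw [Finset.mul_sum]
    refine Finset.sum_congr rfl fun k _ => ?_
    rw [real_inner_smul_left, sum_inner]
    simp only [real_inner_smul_left]
    rw [mul_div_assoc, Finset.sum_div]
  have hD : 0 ≤ (2 * ρ / θ) * (∑ i, ∑ j, D i j ^ 2) := by positivity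
  have hH : 0 ≤ κ * ‖h‖ ^ 2 / θ ^ 2 := by positivity
  have hmul : 0 ≤ (C₀ / π) * ∑ k, ∑ l,
      mixC (fun i => ρ' i / ρ) k l * ⟪G l, G k⟫ / (m k * (θ * ρ' k / m k)) :=
    mul_nonneg (div_nonneg hC₀.le hπ.le) hS2
  rw [hF]
  linarith
end
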